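/- Let A₁, A₂ be finite nonempty sets, let Ĝ, G* : A₁ × A₂ → ℝ be two payoff matrices, let η > 0, and let π₁ʳᵉᶠ ∈ Δ(A₁), π₂ʳᵉᶠ ∈ Δ(A₂) be strictly positive. Let (μ̂, ν̂) be a saddle point of J_Ĝ and (μ*, ν*) a saddle point of J_{G*}. Then ‖μ̂ − μ*‖₁ + ‖ν̂ − ν*‖₁ ≤ 2η·ℰ, where ℰ = max( max_{a₁} |Σ_{a₂} ν*(a₂)·(Ĝ(a₁,a₂) − G*(a₁,a₂))| , max_{a₂} |Σ_{a₁} μ*(a₁)·(Ĝ(a₁,a₂) − G*(a₁,a₂))| ). In particular, ‖μ̂ − μ*‖₁ + ‖ν̂ − ν*‖₁ ≤ 2η·max_{a₁,a₂} |Ĝ(a₁,a₂) − G*(a₁,a₂)|. -/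

import Mathlib

open Finset

/-- The probability simplex on a finite type: nonnegative entries summing to one. -/
def IsSimplex {A : Type*} [Fintype A] (p : A → ℝ) : Prop :=
  (∀ a, 0 ≤ p a) ∧ ∑ a, p a = 1

/-- KL divergence between two distributions on a finite type
(with the convention `0 * log 0 = 0`, which holds in Lean since `Real.log 0 = 0`). -/
noncomputable def KLdiv {A : Type*} [Fintype A] (p q : A → ℝ) : ℝ :=
  ∑ a, p a * Real.log (p a / q a)

/-- The KL-regularized zero-sum game objective
`J_G(μ, ν) = Σ_{a₁,a₂} μ(a₁) ν(a₂) G(a₁,a₂) − η⁻¹ KL(μ‖π₁ʳᵉᶠ) + η⁻¹ KL(ν‖π₂ʳᵉᶠ)`. -/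
noncomputable def J {A₁ A₂ : Type*} [Fintype A₁] [Fintype A₂]
    (G : A₁ × A₂ → ℝ) (η : ℝ) (π₁ref : A₁ → ℝ) (π₂ref : A₂ → ℝ)
    (μ : A₁ → ℝ) (ν : A₂ → ℝ) : ℝ :=
  (∑ a₁, ∑ a₂, μ a₁ * ν a₂ * G (a₁, a₂))
    - η⁻¹ * KLdiv μ π₁ref + η⁻¹ * KLdiv ν π₂ref

/-- `(μs, νs)` is a saddle point of `J_G` over the product of simplices:
`J_G(μ, νs) ≤ J_G(μs, νs) ≤ J_G(μs, ν)` for all `μ ∈ Δ(A₁)`, `ν ∈ Δ(A₂)`. -/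
def IsSaddle {A₁ A₂ : Type*} [Fintype A₁] [Fintype A₂]
    (G : A₁ × A₂ → ℝ) (η : ℝ) (π₁ref : A₁ → ℝ) (π₂ref : A₂ → ℝ)
    (μs : A₁ → ℝ) (νs : A₂ → ℝ) : Prop :=
  IsSimplex μs ∧ IsSimplex νs ∧
  (∀ μ : A₁ → ℝ, IsSimplex μ → J G η π₁ref π₂ref μ νs ≤ J G η π₁ref π₂ref μs νs) ∧
  (∀ ν : A₂ → ℝ, IsSimplex ν → J G η π₁ref π₂ref μs νs ≤ J G η π₁ref π₂ref μs ν)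


lemma logmean_aux : MonotoneOn (fun x : ℝ => (x+1) * Real.log x - 2*(x-1)) (Set.Ioi 0) := by
  have hconv : Convex ℝ (Set.Ioi (0:ℝ)) := convex_Ioi 0
  have hder : ∀ x ∈ interior (Set.Ioi (0:ℝ)),
      HasDerivAt (fun x : ℝ => (x+1) * Real.log x - 2*(x-1)) (Real.log x + 1/x - 1) x := by
    intro x hx
    rw [interior_Ioi] at hx
    have hx0 : (x:ℝ) ≠ 0 := ne_of_gt hx
    have h1 : HasDerivAt (fun x : ℝ => (x+1) * Real.log x) (1 * Real.log x + (x+1) * x⁻¹) x := by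
      exact ((hasDerivAt_id x).add_const 1).mul (Real.hasDerivAt_log hx0)
    have h2 : HasDerivAt (fun x : ℝ => 2*(x-1)) 2 x := by
      simpa using ((hasDerivAt_id x).sub_const 1).const_mul 2
    have := h1.sub h2
    refine this.congr_deriv ?_
    rw [add_mul, mul_inv_cancel₀ hx0]
    ring
  apply monotoneOn_of_deriv_nonneg hconv
  · apply ContinuousOn.sub
    · exact (continuousOn_id.add continuousOn_const).mul
        (Real.continuousOn_log.mono (by intro x hx; exact ne_of_gt (Set.mem_Ioi.mp hx)))
    · fun_prop
  · intro x hx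
    exact (hder x hx).differentiableAt.differentiableWithinAt
  · intro x hx
    rw [(hder x hx).deriv]
    rw [interior_Ioi] at hx
    have hx' : (0:ℝ) < x := hx
    have h := Real.log_le_sub_one_of_pos (show (0:ℝ) < 1/x from by positivity)
    rw [Real.log_div one_ne_zero (ne_of_gt hx'), Real.log_one] at h
    linarith

lemma logmean_x (x : ℝ) (hx : 0 < x) : 2*(x-1)^2 ≤ (x-1) * Real.log x * (x+1) := by
  rcases le_total 1 x with h1 | h1
  · have := logmean_aux (Set.mem_Ioi.mpr one_pos) (Set.mem_Ioi.mpr hx) h1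
    simp only [Real.log_one] at this
    nlinarith [this, sub_nonneg.mpr h1]
  · have := logmean_aux (Set.mem_Ioi.mpr hx) (Set.mem_Ioi.mpr one_pos) h1
    simp only [Real.log_one] at this
    nlinarith [this, sub_nonpos.mpr h1]

lemma logmean (p q : ℝ) (hp : 0 < p) (hq : 0 < q) :
    2*(p-q)^2 / (p+q) ≤ (p-q) * (Real.log p - Real.log q) := by
  have hx : 0 < p/q := div_pos hp hq
  have H := logmean_x (p/q) hx
  rw [Real.log_div hp.ne' hq.ne'] at H
  rw [div_le_iff₀ (by linarith : (0:ℝ) < p+q)]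
  have hq2 : (0:ℝ) < q^2 := by positivity
  have h1 : (p/q - 1) * q = p - q := by field_simp
  have h2 : (p/q + 1) * q = p + q := by field_simp
  calc 2*(p-q)^2 = 2*(p/q-1)^2 * q^2 := by rw [← h1]; ring
    _ ≤ (p/q-1) * (Real.log p - Real.log q) * (p/q+1) * q^2 := by
        nlinarith [mul_le_mul_of_nonneg_right H hq2.le]
    _ = ((p/q-1)*q) * (Real.log p - Real.log q) * ((p/q+1)*q) := by ring
    _ = (p-q) * (Real.log p - Real.log q) * (p+q) := by rw [h1, h2]

lemma symKL_ge {A : Type*} [Fintype A] (p q : A → ℝ)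
    (hp : IsSimplex p) (hq : IsSimplex q)
    (hppos : ∀ a, 0 < p a) (hqpos : ∀ a, 0 < q a) :
    (∑ a, |p a - q a|)^2 ≤ KLdiv p q + KLdiv q p := by
  have step1 : KLdiv p q + KLdiv q p
      = ∑ a, (p a - q a) * (Real.log (p a) - Real.log (q a)) := by
    rw [KLdiv, KLdiv, ← Finset.sum_add_distrib]
    apply Finset.sum_congr rfl
    intro a _
    rw [Real.log_div (hppos a).ne' (hqpos a).ne', Real.log_div (hqpos a).ne' (hppos a).ne']
    ring
  have step2 : ∑ a, 2*(p a - q a)^2 / (p a + q a)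
      ≤ ∑ a, (p a - q a) * (Real.log (p a) - Real.log (q a)) :=
    Finset.sum_le_sum fun a _ => logmean _ _ (hppos a) (hqpos a)
  have cs := Finset.sum_mul_sq_le_sq_mul_sq Finset.univ
    (fun a => |p a - q a| / Real.sqrt (p a + q a)) (fun a => Real.sqrt (p a + q a))
  have hs : ∀ a : A, (0:ℝ) < p a + q a := fun a => by
    have := hppos a; have := hqpos a; linarith
  have e1 : ∀ a : A, |p a - q a| / Real.sqrt (p a + q a) * Real.sqrt (p a + q a)
      = |p a - q a| := by
    intro a
    exact div_mul_cancel₀ _ (Real.sqrt_ne_zero'.mpr (hs a))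
  have e2 : ∀ a : A, (|p a - q a| / Real.sqrt (p a + q a))^2 = (p a - q a)^2/(p a + q a) := by
    intro a
    rw [div_pow, sq_abs, Real.sq_sqrt (hs a).le]
  have e3 : ∑ a, (Real.sqrt (p a + q a))^2 = 2 := by
    have h : ∀ a : A, (Real.sqrt (p a + q a))^2 = p a + q a := fun a => Real.sq_sqrt (hs a).le
    simp only [h, Finset.sum_add_distrib, hp.2, hq.2]
    norm_num
  calc (∑ a, |p a - q a|)^2
      = (∑ a, (|p a - q a| / Real.sqrt (p a + q a)) * Real.sqrt (p a + q a))^2 := by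
        simp only [e1]
    _ ≤ (∑ a, (|p a - q a| / Real.sqrt (p a + q a))^2) * ∑ a, (Real.sqrt (p a + q a))^2 :=
        cs
    _ = (∑ a, (p a - q a)^2/(p a + q a)) * 2 := by rw [e3]; simp only [e2]
    _ = ∑ a, 2*(p a - q a)^2 / (p a + q a) := by
        rw [Finset.sum_mul]
        exact Finset.sum_congr rfl fun a _ => by ring
    _ ≤ ∑ a, (p a - q a) * (Real.log (p a) - Real.log (q a)) := step2
    _ = KLdiv p q + KLdiv q p := step1.symm


noncomputable def gibbs {A : Type*} [Fintype A] (η : ℝ) (π : A → ℝ) (c : A → ℝ) : A → ℝ :=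
  fun a => π a * Real.exp (η * c a) / ∑ b, π b * Real.exp (η * c b)

set_option linter.unusedSectionVars false

section Gibbs

variable {A : Type*} [Fintype A] [Nonempty A] {η : ℝ} {π c : A → ℝ}

lemma gibbsZ_pos (hπ : ∀ a, 0 < π a) : 0 < ∑ b, π b * Real.exp (η * c b) :=
  Finset.sum_pos (fun b _ => mul_pos (hπ b) (Real.exp_pos _)) Finset.univ_nonempty

lemma gibbs_pos (hπ : ∀ a, 0 < π a) (a : A) : 0 < gibbs η π c a :=
  div_pos (mul_pos (hπ a) (Real.exp_pos _)) (gibbsZ_pos hπ)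

lemma gibbs_simplex (hπ : ∀ a, 0 < π a) : IsSimplex (gibbs η π c) := by
  refine ⟨fun a => (gibbs_pos hπ a).le, ?_⟩
  simp only [gibbs]
  rw [← Finset.sum_div, div_self (gibbsZ_pos (η := η) (c := c) hπ).ne']

lemma KLdiv_self (g : A → ℝ) : KLdiv g g = 0 := by
  rw [KLdiv]
  apply Finset.sum_eq_zero
  intro a _
  rcases eq_or_ne (g a) 0 with h | h
  · simp [h]
  · rw [div_self h, Real.log_one, mul_zero]

lemma gibbs_identity (hπ : ∀ a, 0 < π a) (hη : 0 < η) (μ : A → ℝ) (hμ : IsSimplex μ) :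
    ∑ a, μ a * c a - η⁻¹ * KLdiv μ π
      = η⁻¹ * Real.log (∑ b, π b * Real.exp (η * c b)) - η⁻¹ * KLdiv μ (gibbs η π c) := by
  have hZ := gibbsZ_pos (η := η) (c := c) hπ
  have key : ∀ a : A, μ a * Real.log (μ a / gibbs η π c a)
      = μ a * Real.log (μ a / π a) - η * (μ a * c a)
        + μ a * Real.log (∑ b, π b * Real.exp (η * c b)) := by
    intro a
    rcases eq_or_lt_of_le (hμ.1 a) with h0 | hpos
    · simp [← h0]
    · have hg := gibbs_pos (η := η) (c := c) hπ a
      rw [Real.log_div hpos.ne' hg.ne', Real.log_div hpos.ne' (hπ a).ne']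
      have hlg : Real.log (gibbs η π c a)
          = Real.log (π a) + η * c a - Real.log (∑ b, π b * Real.exp (η * c b)) := by
        rw [gibbs, Real.log_div (mul_pos (hπ a) (Real.exp_pos _)).ne' hZ.ne',
          Real.log_mul (hπ a).ne' (Real.exp_ne_zero _), Real.log_exp]
      rw [hlg]
      ring
  have hKL : KLdiv μ (gibbs η π c)
      = KLdiv μ π - η * (∑ a, μ a * c a)
        + Real.log (∑ b, π b * Real.exp (η * c b)) := by
    rw [KLdiv, KLdiv]
    rw [Finset.sum_congr rfl fun a _ => key a]
    rw [Finset.sum_add_distrib, Finset.sum_sub_distrib, ← Finset.mul_sum, ← Finset.sum_mul,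
      hμ.2, one_mul]
  rw [hKL]
  field_simp
  ring

lemma eq_of_KL_nonpos (μ g : A → ℝ) (hμ : IsSimplex μ) (hg : IsSimplex g)
    (hgpos : ∀ a, 0 < g a) (h : KLdiv μ g ≤ 0) : μ = g := by
  have hterm : ∀ a : A, μ a - g a ≤ μ a * Real.log (μ a / g a) := by
    intro a
    rcases eq_or_lt_of_le (hμ.1 a) with h0 | hpos
    · simp [← h0]
      linarith [hgpos a]
    · have hlog := Real.log_le_sub_one_of_pos (div_pos (hgpos a) hpos)
      rw [Real.log_div (hgpos a).ne' hpos.ne'] at hlog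
      have h3 := mul_le_mul_of_nonneg_left hlog hpos.le
      have h4 : μ a * (g a / μ a - 1) = g a - μ a := by field_simp
      rw [Real.log_div hpos.ne' (hgpos a).ne']
      have h5 : μ a * (Real.log (μ a) - Real.log (g a))
          = -(μ a * (Real.log (g a) - Real.log (μ a))) := by ring
      linarith [h3, h4, h5]
  have hslack : ∀ a ∈ Finset.univ, (0:ℝ) ≤ μ a * Real.log (μ a / g a) - (μ a - g a) :=
    fun a _ => by linarith [hterm a]
  have hsum : ∑ a, (μ a * Real.log (μ a / g a) - (μ a - g a)) = KLdiv μ g := by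
    rw [Finset.sum_sub_distrib, Finset.sum_sub_distrib, hμ.2, hg.2, KLdiv]
    ring
  have hzero : ∀ a ∈ Finset.univ, μ a * Real.log (μ a / g a) - (μ a - g a) = 0 := by
    rw [← Finset.sum_eq_zero_iff_of_nonneg hslack]
    exact le_antisymm (by rw [hsum]; exact h) (Finset.sum_nonneg hslack)
  funext a
  have ha := hzero a (Finset.mem_univ a)
  rcases eq_or_lt_of_le (hμ.1 a) with h0 | hpos
  · exfalso
    simp [← h0] at ha
    linarith [hgpos a, ha]
  · by_contra hne
    have hne' : g a / μ a ≠ 1 := by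
      intro hcon
      exact hne ((div_eq_one_iff_eq hpos.ne').mp hcon).symm
    have hlog := Real.log_lt_sub_one_of_pos (div_pos (hgpos a) hpos) hne'
    rw [Real.log_div (hgpos a).ne' hpos.ne'] at hlog
    have h3 := mul_lt_mul_of_pos_left hlog hpos
    have h4 : μ a * (g a / μ a - 1) = g a - μ a := by field_simp
    rw [Real.log_div hpos.ne' (hgpos a).ne'] at ha
    have h5 : μ a * (Real.log (μ a) - Real.log (g a))
        = -(μ a * (Real.log (g a) - Real.log (μ a))) := by ring
    linarith [h3, h4, h5, ha]

lemma maximizer_gap (hπ : ∀ a, 0 < π a) (hη : 0 < η) (μs : A → ℝ) (hμs : IsSimplex μs)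
    (hmax : ∀ μ : A → ℝ, IsSimplex μ →
      ∑ a, μ a * c a - η⁻¹ * KLdiv μ π ≤ ∑ a, μs a * c a - η⁻¹ * KLdiv μs π) :
    (∀ a, 0 < μs a) ∧ ∀ μ : A → ℝ, IsSimplex μ →
      (∑ a, μs a * c a - η⁻¹ * KLdiv μs π) - (∑ a, μ a * c a - η⁻¹ * KLdiv μ π)
        = η⁻¹ * KLdiv μ μs := by
  have hgs := gibbs_simplex (η := η) (c := c) hπ
  have hEq : μs = gibbs η π c := by
    apply eq_of_KL_nonpos μs _ hμs hgs (gibbs_pos hπ)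
    have h1 := hmax (gibbs η π c) hgs
    rw [gibbs_identity hπ hη _ hgs, gibbs_identity hπ hη _ hμs, KLdiv_self] at h1
    have hηinv : 0 < η⁻¹ := inv_pos.mpr hη
    nlinarith [h1]
  subst hEq
  refine ⟨gibbs_pos hπ, fun μ hμ => ?_⟩
  rw [gibbs_identity hπ hη _ hgs, gibbs_identity hπ hη _ hμ, KLdiv_self]
  ring

end Gibbs


lemma sum_mul_le {B : Type*} [Fintype B] (z w : B → ℝ) (M : ℝ) (hM : ∀ b, |w b| ≤ M) :
    ∑ b, z b * w b ≤ (∑ b, |z b|) * M := by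
  rw [Finset.sum_mul]
  refine Finset.sum_le_sum fun b _ => ?_
  calc z b * w b ≤ |z b * w b| := le_abs_self _
    _ = |z b| * |w b| := abs_mul _ _
    _ ≤ |z b| * M := mul_le_mul_of_nonneg_left (hM b) (abs_nonneg _)

set_option maxHeartbeats 2000000 in
/-- ℓ1 stability of regularized saddle points with respect to
perturbations of the payoff matrix, via the Nash-averaged error `ℰ`. -/
theorem stmt8 {A₁ A₂ : Type*} [Fintype A₁] [Fintype A₂] [Nonempty A₁] [Nonempty A₂]
    (Ghat Gstar : A₁ × A₂ → ℝ) (η : ℝ) (hη : 0 < η)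
    (π₁ref : A₁ → ℝ) (π₂ref : A₂ → ℝ)
    (h₁ : IsSimplex π₁ref) (h₂ : IsSimplex π₂ref)
    (h₁pos : ∀ a, 0 < π₁ref a) (h₂pos : ∀ a, 0 < π₂ref a)
    (μhat : A₁ → ℝ) (νhat : A₂ → ℝ) (μs : A₁ → ℝ) (νs : A₂ → ℝ)
    (hhat : IsSaddle Ghat η π₁ref π₂ref μhat νhat)
    (hstar : IsSaddle Gstar η π₁ref π₂ref μs νs) :
    ((∑ a₁, |μhat a₁ - μs a₁|) + (∑ a₂, |νhat a₂ - νs a₂|)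
      ≤ 2 * η * max
        (Finset.univ.sup' Finset.univ_nonempty
          (fun a₁ => |∑ a₂, νs a₂ * (Ghat (a₁, a₂) - Gstar (a₁, a₂))|))
        (Finset.univ.sup' Finset.univ_nonempty
          (fun a₂ => |∑ a₁, μs a₁ * (Ghat (a₁, a₂) - Gstar (a₁, a₂))|))) ∧
    ((∑ a₁, |μhat a₁ - μs a₁|) + (∑ a₂, |νhat a₂ - νs a₂|)
      ≤ 2 * η * Finset.univ.sup' Finset.univ_nonempty
          (fun p : A₁ × A₂ => |Ghat p - Gstar p|)) := by
    classical
  obtain ⟨hμh, hνh, hmaxh, hminh⟩ := hhat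
  obtain ⟨hμst, hνst, hmaxs, hmins⟩ := hstar
  have hηinv : (0:ℝ) < η⁻¹ := inv_pos.mpr hη
  have bilin₁ : ∀ (G : A₁ × A₂ → ℝ) (μ : A₁ → ℝ) (ν : A₂ → ℝ),
      ∑ a₁, ∑ a₂, μ a₁ * ν a₂ * G (a₁, a₂) = ∑ a₁, μ a₁ * ∑ a₂, ν a₂ * G (a₁, a₂) := by
    intro G μ ν
    refine Finset.sum_congr rfl fun a₁ _ => ?_
    rw [Finset.mul_sum]
    exact Finset.sum_congr rfl fun a₂ _ => by ring
  have bilin₂ : ∀ (G : A₁ × A₂ → ℝ) (μ : A₁ → ℝ) (ν : A₂ → ℝ),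
      ∑ a₁, ∑ a₂, μ a₁ * ν a₂ * G (a₁, a₂) = ∑ a₂, ν a₂ * ∑ a₁, μ a₁ * G (a₁, a₂) := by
    intro G μ ν
    rw [Finset.sum_comm]
    refine Finset.sum_congr rfl fun a₂ _ => ?_
    rw [Finset.mul_sum]
    exact Finset.sum_congr rfl fun a₁ _ => by ring
  -- the four maximizer characterizations
  have hmaxs' : ∀ μ : A₁ → ℝ, IsSimplex μ →
      ∑ a₁, μ a₁ * (∑ a₂, νs a₂ * Gstar (a₁, a₂)) - η⁻¹ * KLdiv μ π₁ref
        ≤ ∑ a₁, μs a₁ * (∑ a₂, νs a₂ * Gstar (a₁, a₂)) - η⁻¹ * KLdiv μs π₁ref := by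
    intro μ hμ
    have h := hmaxs μ hμ
    simp only [J] at h
    rw [bilin₁ Gstar μ νs, bilin₁ Gstar μs νs] at h
    linarith
  have gapμs := maximizer_gap h₁pos hη μs hμst hmaxs'
  have hmaxh' : ∀ μ : A₁ → ℝ, IsSimplex μ →
      ∑ a₁, μ a₁ * (∑ a₂, νhat a₂ * Ghat (a₁, a₂)) - η⁻¹ * KLdiv μ π₁ref
        ≤ ∑ a₁, μhat a₁ * (∑ a₂, νhat a₂ * Ghat (a₁, a₂)) - η⁻¹ * KLdiv μhat π₁ref := by
    intro μ hμ
    have h := hmaxh μ hμ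
    simp only [J] at h
    rw [bilin₁ Ghat μ νhat, bilin₁ Ghat μhat νhat] at h
    linarith
  have gapμh := maximizer_gap h₁pos hη μhat hμh hmaxh'
  have hmins' : ∀ ν : A₂ → ℝ, IsSimplex ν →
      ∑ a₂, ν a₂ * (-(∑ a₁, μs a₁ * Gstar (a₁, a₂))) - η⁻¹ * KLdiv ν π₂ref
        ≤ ∑ a₂, νs a₂ * (-(∑ a₁, μs a₁ * Gstar (a₁, a₂))) - η⁻¹ * KLdiv νs π₂ref := by
    intro ν hν
    have h := hmins ν hν
    simp only [J] at h
    rw [bilin₂ Gstar μs νs, bilin₂ Gstar μs ν] at h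
    simp only [mul_neg, Finset.sum_neg_distrib]
    linarith
  have gapνs := maximizer_gap h₂pos hη νs hνst hmins'
  have hminh' : ∀ ν : A₂ → ℝ, IsSimplex ν →
      ∑ a₂, ν a₂ * (-(∑ a₁, μhat a₁ * Ghat (a₁, a₂))) - η⁻¹ * KLdiv ν π₂ref
        ≤ ∑ a₂, νhat a₂ * (-(∑ a₁, μhat a₁ * Ghat (a₁, a₂))) - η⁻¹ * KLdiv νhat π₂ref := by
    intro ν hν
    have h := hminh ν hν
    simp only [J] at h
    rw [bilin₂ Ghat μhat νhat, bilin₂ Ghat μhat ν] at h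
    simp only [mul_neg, Finset.sum_neg_distrib]
    linarith
  have gapνh := maximizer_gap h₂pos hη νhat hνh hminh'
  -- strong monotonicity identities
  have e1 := gapμs.2 μhat hμh
  have e2 := gapμh.2 μs hμst
  have e3 := gapνs.2 νhat hνh
  have e4 := gapνh.2 νs hνst
  have Hμ : ∑ a₁, (μs a₁ - μhat a₁) *
      ((∑ a₂, νs a₂ * Gstar (a₁, a₂)) - (∑ a₂, νhat a₂ * Ghat (a₁, a₂)))
      = η⁻¹ * KLdiv μhat μs + η⁻¹ * KLdiv μs μhat := by
    have expand : ∑ a₁, (μs a₁ - μhat a₁) *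
        ((∑ a₂, νs a₂ * Gstar (a₁, a₂)) - (∑ a₂, νhat a₂ * Ghat (a₁, a₂)))
        = ((∑ a₁, μs a₁ * ∑ a₂, νs a₂ * Gstar (a₁, a₂))
            - (∑ a₁, μhat a₁ * ∑ a₂, νs a₂ * Gstar (a₁, a₂)))
          + ((∑ a₁, μhat a₁ * ∑ a₂, νhat a₂ * Ghat (a₁, a₂))
            - (∑ a₁, μs a₁ * ∑ a₂, νhat a₂ * Ghat (a₁, a₂))) := by
      simp only [sub_mul, mul_sub, Finset.sum_sub_distrib]
      ring
    rw [expand]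
    linarith [e1, e2]
  have Hν : ∑ a₂, (νs a₂ - νhat a₂) *
      ((∑ a₁, μhat a₁ * Ghat (a₁, a₂)) - (∑ a₁, μs a₁ * Gstar (a₁, a₂)))
      = η⁻¹ * KLdiv νhat νs + η⁻¹ * KLdiv νs νhat := by
    have expand : ∑ a₂, (νs a₂ - νhat a₂) *
        ((∑ a₁, μhat a₁ * Ghat (a₁, a₂)) - (∑ a₁, μs a₁ * Gstar (a₁, a₂)))
        = ((∑ a₂, νhat a₂ * -(∑ a₁, μhat a₁ * Ghat (a₁, a₂)))
            - (∑ a₂, νs a₂ * -(∑ a₁, μhat a₁ * Ghat (a₁, a₂))))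
          + ((∑ a₂, νs a₂ * -(∑ a₁, μs a₁ * Gstar (a₁, a₂)))
            - (∑ a₂, νhat a₂ * -(∑ a₁, μs a₁ * Gstar (a₁, a₂)))) := by
      simp only [mul_neg, sub_mul, mul_sub, Finset.sum_sub_distrib, Finset.sum_neg_distrib]
      ring
    rw [expand]
    linarith [e3, e4]
  -- decomposition of the monotonicity gap via the error terms
  have key : (∑ a₁, (μs a₁ - μhat a₁) *
        ((∑ a₂, νs a₂ * Gstar (a₁, a₂)) - (∑ a₂, νhat a₂ * Ghat (a₁, a₂))))
      + (∑ a₂, (νs a₂ - νhat a₂) *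
        ((∑ a₁, μhat a₁ * Ghat (a₁, a₂)) - (∑ a₁, μs a₁ * Gstar (a₁, a₂))))
      = (∑ a₁, (μs a₁ - μhat a₁) * (∑ a₂, νs a₂ * (Gstar (a₁, a₂) - Ghat (a₁, a₂))))
        + (∑ a₂, (νs a₂ - νhat a₂) * (∑ a₁, μs a₁ * (Ghat (a₁, a₂) - Gstar (a₁, a₂)))) := by
    have L1 : ∑ a₁, (μs a₁ - μhat a₁) *
        ((∑ a₂, νs a₂ * Gstar (a₁, a₂)) - (∑ a₂, νhat a₂ * Ghat (a₁, a₂)))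
        = ∑ a₁, ∑ a₂, (μs a₁ - μhat a₁) *
            (νs a₂ * Gstar (a₁, a₂) - νhat a₂ * Ghat (a₁, a₂)) := by
      refine Finset.sum_congr rfl fun a₁ _ => ?_
      rw [← Finset.sum_sub_distrib, Finset.mul_sum]
    have L2 : ∑ a₂, (νs a₂ - νhat a₂) *
        ((∑ a₁, μhat a₁ * Ghat (a₁, a₂)) - (∑ a₁, μs a₁ * Gstar (a₁, a₂)))
        = ∑ a₁, ∑ a₂, (νs a₂ - νhat a₂) *
            (μhat a₁ * Ghat (a₁, a₂) - μs a₁ * Gstar (a₁, a₂)) := by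
      rw [Finset.sum_comm]
      refine Finset.sum_congr rfl fun a₂ _ => ?_
      rw [← Finset.sum_sub_distrib, Finset.mul_sum]
    have R1 : ∑ a₁, (μs a₁ - μhat a₁) * (∑ a₂, νs a₂ * (Gstar (a₁, a₂) - Ghat (a₁, a₂)))
        = ∑ a₁, ∑ a₂, (μs a₁ - μhat a₁) * (νs a₂ * (Gstar (a₁, a₂) - Ghat (a₁, a₂))) :=
      Finset.sum_congr rfl fun a₁ _ => by rw [Finset.mul_sum]
    have R2 : ∑ a₂, (νs a₂ - νhat a₂) * (∑ a₁, μs a₁ * (Ghat (a₁, a₂) - Gstar (a₁, a₂)))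
        = ∑ a₁, ∑ a₂, (νs a₂ - νhat a₂) * (μs a₁ * (Ghat (a₁, a₂) - Gstar (a₁, a₂))) := by
      rw [Finset.sum_comm]
      exact Finset.sum_congr rfl fun a₂ _ => by rw [Finset.mul_sum]
    rw [L1, L2, R1, R2, ← Finset.sum_add_distrib, ← Finset.sum_add_distrib]
    refine Finset.sum_congr rfl fun a₁ _ => ?_
    rw [← Finset.sum_add_distrib, ← Finset.sum_add_distrib]
    exact Finset.sum_congr rfl fun a₂ _ => by ring
  -- Pinsker-type bounds
  have hsym1 := symKL_ge μhat μs hμh hμst gapμh.1 gapμs.1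
  have hsym2 := symKL_ge νhat νs hνh hνst gapνh.1 gapνs.1
  set E := max
      (Finset.univ.sup' Finset.univ_nonempty
        (fun a₁ => |∑ a₂, νs a₂ * (Ghat (a₁, a₂) - Gstar (a₁, a₂))|))
      (Finset.univ.sup' Finset.univ_nonempty
        (fun a₂ => |∑ a₁, μs a₁ * (Ghat (a₁, a₂) - Gstar (a₁, a₂))|)) with hEdef
  have hE1 : ∀ a₁ : A₁, |∑ a₂, νs a₂ * (Ghat (a₁, a₂) - Gstar (a₁, a₂))| ≤ E := fun a₁ =>
    le_trans (Finset.le_sup'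
      (fun a₁ => |∑ a₂, νs a₂ * (Ghat (a₁, a₂) - Gstar (a₁, a₂))|)
      (Finset.mem_univ a₁)) (le_max_left _ _)
  have hE2 : ∀ a₂ : A₂, |∑ a₁, μs a₁ * (Ghat (a₁, a₂) - Gstar (a₁, a₂))| ≤ E := fun a₂ =>
    le_trans (Finset.le_sup'
      (fun a₂ => |∑ a₁, μs a₁ * (Ghat (a₁, a₂) - Gstar (a₁, a₂))|)
      (Finset.mem_univ a₂)) (le_max_right _ _)
  have hE0 : 0 ≤ E := le_trans (abs_nonneg _) (hE1 (Classical.arbitrary A₁))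
  -- bounding the two error sums
  have b1 : ∑ a₁, (μs a₁ - μhat a₁) * (∑ a₂, νs a₂ * (Gstar (a₁, a₂) - Ghat (a₁, a₂)))
      ≤ (∑ a₁, |μs a₁ - μhat a₁|) * E := by
    refine sum_mul_le _ _ E fun a₁ => ?_
    have hflip : ∑ a₂, νs a₂ * (Gstar (a₁, a₂) - Ghat (a₁, a₂))
        = -∑ a₂, νs a₂ * (Ghat (a₁, a₂) - Gstar (a₁, a₂)) := by
      rw [← Finset.sum_neg_distrib]
      exact Finset.sum_congr rfl fun a₂ _ => by ring
    rw [hflip, abs_neg]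
    exact hE1 a₁
  have b2 : ∑ a₂, (νs a₂ - νhat a₂) * (∑ a₁, μs a₁ * (Ghat (a₁, a₂) - Gstar (a₁, a₂)))
      ≤ (∑ a₂, |νs a₂ - νhat a₂|) * E :=
    sum_mul_le _ _ E fun a₂ => hE2 a₂
  have habs1 : ∑ a₁, |μs a₁ - μhat a₁| = ∑ a₁, |μhat a₁ - μs a₁| :=
    Finset.sum_congr rfl fun a₁ _ => abs_sub_comm _ _
  have habs2 : ∑ a₂, |νs a₂ - νhat a₂| = ∑ a₂, |νhat a₂ - νs a₂| :=
    Finset.sum_congr rfl fun a₂ _ => abs_sub_comm _ _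
  set x := ∑ a₁, |μhat a₁ - μs a₁| with hxdef
  set y := ∑ a₂, |νhat a₂ - νs a₂| with hydef
  have hx0 : 0 ≤ x := Finset.sum_nonneg fun a _ => abs_nonneg _
  have hy0 : 0 ≤ y := Finset.sum_nonneg fun a _ => abs_nonneg _
  -- combine
  have big : η⁻¹ * x ^ 2 + η⁻¹ * y ^ 2 ≤ x * E + y * E := by
    have p1 : η⁻¹ * x ^ 2 ≤ η⁻¹ * KLdiv μhat μs + η⁻¹ * KLdiv μs μhat := by
      nlinarith [hsym1, hηinv]
    have p2 : η⁻¹ * y ^ 2 ≤ η⁻¹ * KLdiv νhat νs + η⁻¹ * KLdiv νs νhat := by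
      nlinarith [hsym2, hηinv]
    rw [habs1] at b1
    rw [habs2] at b2
    linarith [p1, p2, Hμ, Hν, key, b1, b2]
  have hinv : η * η⁻¹ = 1 := mul_inv_cancel₀ hη.ne'
  have big2 : x ^ 2 + y ^ 2 ≤ η * (x * E + y * E) := by
    have h := mul_le_mul_of_nonneg_left big hη.le
    calc x ^ 2 + y ^ 2 = η * (η⁻¹ * x ^ 2 + η⁻¹ * y ^ 2) := by
          field_simp
      _ ≤ η * (x * E + y * E) := h
  have first : x + y ≤ 2 * η * E := by
    rcases eq_or_lt_of_le (add_nonneg hx0 hy0) with h0 | hxy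
    · have h2ηE : 0 ≤ 2 * η * E := by positivity
      linarith [h0.symm, h2ηE]
    · have h2 : (x + y) ^ 2 ≤ 2 * η * E * (x + y) := by
        nlinarith [big2, sq_nonneg (x - y)]
      nlinarith [h2, hxy]
  refine ⟨first, ?_⟩
  set S := Finset.univ.sup' Finset.univ_nonempty
      (fun p : A₁ × A₂ => |Ghat p - Gstar p|) with hSdef
  have hEG : E ≤ S := by
    apply max_le
    · apply Finset.sup'_le
      intro a₁ _
      calc |∑ a₂, νs a₂ * (Ghat (a₁, a₂) - Gstar (a₁, a₂))|
          ≤ ∑ a₂, |νs a₂ * (Ghat (a₁, a₂) - Gstar (a₁, a₂))| :=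
            Finset.abs_sum_le_sum_abs _ _
        _ = ∑ a₂, νs a₂ * |Ghat (a₁, a₂) - Gstar (a₁, a₂)| :=
            Finset.sum_congr rfl fun a₂ _ => by
              rw [abs_mul, abs_of_nonneg (hνst.1 a₂)]
        _ ≤ ∑ a₂, νs a₂ * S := Finset.sum_le_sum fun a₂ _ =>
            mul_le_mul_of_nonneg_left
              (Finset.le_sup' (fun p : A₁ × A₂ => |Ghat p - Gstar p|)
                (Finset.mem_univ (a₁, a₂))) (hνst.1 a₂)
        _ = S := by rw [← Finset.sum_mul, hνst.2, one_mul]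
    · apply Finset.sup'_le
      intro a₂ _
      calc |∑ a₁, μs a₁ * (Ghat (a₁, a₂) - Gstar (a₁, a₂))|
          ≤ ∑ a₁, |μs a₁ * (Ghat (a₁, a₂) - Gstar (a₁, a₂))| :=
            Finset.abs_sum_le_sum_abs _ _
        _ = ∑ a₁, μs a₁ * |Ghat (a₁, a₂) - Gstar (a₁, a₂)| :=
            Finset.sum_congr rfl fun a₁ _ => by
              rw [abs_mul, abs_of_nonneg (hμst.1 a₁)]
        _ ≤ ∑ a₁, μs a₁ * S := Finset.sum_le_sum fun a₁ _ =>
            mul_le_mul_of_nonneg_left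
              (Finset.le_sup' (fun p : A₁ × A₂ => |Ghat p - Gstar p|)
                (Finset.mem_univ (a₁, a₂))) (hμst.1 a₁)
        _ = S := by rw [← Finset.sum_mul, hμst.2, one_mul]
  calc x + y ≤ 2 * η * E := first
    _ ≤ 2 * η * S := by
        have : 0 ≤ 2 * η := by linarith
        exact mul_le_mul_of_nonneg_left hEG this
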